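/- For a t.d.s. (X,T), the following are equivalent: (1) (X,T) is weakly mixing with dense distal sets; (2) the hyperspace system (K(X), T_K) is weakly mixing with dense distal points; (3) (K(X), T_K) is weakly mixing with dense distal sets. -/

import Mathlib

open MeasureTheory Topology Set Function TopologicalSpace

noncomputable section

namespace Paper

/-- The orbit closure of a point. -/
def orbitClosure {α : Type*} [TopologicalSpace α] (T : α → α) (x : α) : Set α :=
  closure (Set.range fun n : ℕ => T^[n] x)

/-- Topological transitivity: `N(U,V)` is infinite for all non-empty open `U, V`. -/
def IsTransitive {α : Type*} [TopologicalSpace α] (T : α → α) : Prop :=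
  ∀ U V : Set α, IsOpen U → U.Nonempty → IsOpen V → V.Nonempty →
    {n : ℕ | (U ∩ T^[n] ⁻¹' V).Nonempty}.Infinite

/-- Weak mixing: the product system is transitive. -/
def IsWeaklyMixing {α : Type*} [TopologicalSpace α] (T : α → α) : Prop :=
  IsTransitive (Prod.map T T)

/-- Total transitivity. -/
def IsTotallyTransitive {α : Type*} [TopologicalSpace α] (T : α → α) : Prop :=
  ∀ n : ℕ, 0 < n → IsTransitive (T^[n])

/-- A minimal point: its orbit closure is a minimal subsystem. -/
def IsMinimalPoint {α : Type*} [TopologicalSpace α] (T : α → α) (x : α) : Prop :=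
  ∀ Y : Set α, Y.Nonempty → IsClosed Y → MapsTo T Y Y → Y ⊆ orbitClosure T x →
    Y = orbitClosure T x

def IsPeriodicPoint {α : Type*} (T : α → α) (x : α) : Prop :=
  ∃ n : ℕ, 0 < n ∧ T^[n] x = x

def IsPeriodicSystem {α : Type*} (T : α → α) : Prop :=
  ∃ m : ℕ, 0 < m ∧ T^[m] = id

def IsPointwisePeriodic {α : Type*} (T : α → α) : Prop :=
  ∀ x : α, IsPeriodicPoint T x

def IsMSystem {α : Type*} [TopologicalSpace α] (T : α → α) : Prop :=
  IsTransitive T ∧ Dense {x : α | IsMinimalPoint T x}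

def IsPSystem {α : Type*} [TopologicalSpace α] (T : α → α) : Prop :=
  IsTransitive T ∧ Dense {x : α | IsPeriodicPoint T x}

/-- An E-system: transitive with an invariant (Borel) probability measure of full support. -/
def IsESystem {α : Type*} [TopologicalSpace α] (T : α → α) : Prop :=
  IsTransitive T ∧
    let _i : MeasurableSpace α := borel α
    ∃ μ : Measure α, IsProbabilityMeasure μ ∧ μ.map T = μ ∧
      ∀ U : Set α, IsOpen U → U.Nonempty → 0 < μ U

/-- A proximal pair: the orbit closure of `(x, y)` meets the diagonal. -/
def IsProximalPair {α : Type*} [TopologicalSpace α] (T : α → α) (x y : α) : Prop :=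
  ∃ z : α, (z, z) ∈ closure (Set.range fun n : ℕ => (T^[n] x, T^[n] y))

def IsDistalPoint {α : Type*} [TopologicalSpace α] (T : α → α) (x : α) : Prop :=
  ∀ y ∈ orbitClosure T x, IsProximalPair T x y → y = x

def IsDistalSystem {α : Type*} [TopologicalSpace α] (T : α → α) : Prop :=
  ∀ x y : α, IsProximalPair T x y → x = y

/-- The induced map on the hyperspace of non-empty compact (= closed) subsets. -/
def TK {α : Type*} [TopologicalSpace α] (T : α → α) (hT : Continuous T)
    (C : NonemptyCompacts α) : NonemptyCompacts α :=
  ⟨⟨T '' (C : Set α), C.isCompact.image hT⟩, C.nonempty.image T⟩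

/-- The induced map on the space of Borel probability measures. -/
def TM {α : Type*} [TopologicalSpace α] [MeasurableSpace α] [BorelSpace α] (T : α → α)
    (hT : Continuous T) (μ : ProbabilityMeasure α) : ProbabilityMeasure α :=
  μ.map hT.measurable.aemeasurable

/-- Almost dense periodic sets. -/
def AlmostDensePeriodicSets {α : Type*} [TopologicalSpace α] (T : α → α) : Prop :=
  let _i : MeasurableSpace α := borel α
  ∀ U : Set α, IsOpen U → U.Nonempty → ∀ ε : ℝ, 0 < ε →
    ∃ k : ℕ, 0 < k ∧ ∃ μ : Measure α, IsProbabilityMeasure μ ∧ μ.map (T^[k]) = μ ∧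
      μ Uᶜ < ENNReal.ofReal ε

def IsAlmostHYSystem {α : Type*} [TopologicalSpace α] (T : α → α) : Prop :=
  IsTotallyTransitive T ∧ AlmostDensePeriodicSets T

def IsFactorMap {α β : Type*} [TopologicalSpace α] [TopologicalSpace β]
    (T : α → α) (S : β → β) (π : α → β) : Prop :=
  Continuous π ∧ Surjective π ∧ π ∘ T = S ∘ π

def IsJoining {α β : Type*} [TopologicalSpace α] [TopologicalSpace β]
    (T : α → α) (S : β → β) (J : Set (α × β)) : Prop :=
  J.Nonempty ∧ IsClosed J ∧ MapsTo (Prod.map T S) J J ∧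
    Prod.fst '' J = Set.univ ∧ Prod.snd '' J = Set.univ

def AreDisjoint {α β : Type*} [TopologicalSpace α] [TopologicalSpace β]
    (T : α → α) (S : β → β) : Prop :=
  ∀ J : Set (α × β), IsJoining T S J → J = Set.univ

def IsMinimalSystem {β : Type*} [TopologicalSpace β] (S : β → β) : Prop :=
  ∀ Y : Set β, Y.Nonempty → IsClosed Y → MapsTo S Y Y → Y = Set.univ

/-- Disjoint from every minimal system (on a compact metric space). -/
def DisjointFromAllMinimal {α : Type*} [TopologicalSpace α] (T : α → α) : Prop :=
  ∀ (β : Type) (_ : MetricSpace β) (_ : CompactSpace β) (S : β → β),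
    Continuous S → Surjective S → IsMinimalSystem S → AreDisjoint T S


open Filter Metric

attribute [local instance] Ultrafilter.add Ultrafilter.addSemigroup

section Act

variable {α β : Type*} [TopologicalSpace α] [CompactSpace α] [T2Space α]
  [TopologicalSpace β] [CompactSpace β] [T2Space β]

/-- The action of an ultrafilter on `ℕ` on a point. -/
def act (S : α → α) (p : Ultrafilter ℕ) (x : α) : α :=
  Ultrafilter.extend (fun n => S^[n] x) p

theorem act_eq_iff {S : α → α} {p : Ultrafilter ℕ} {x c : α} :
    act S p x = c ↔ Tendsto (fun n => S^[n] x) p (𝓝 c) := by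
  rw [act, ultrafilter_extend_eq_iff]
  rfl

theorem act_tendsto (S : α → α) (p : Ultrafilter ℕ) (x : α) :
    Tendsto (fun n => S^[n] x) p (𝓝 (act S p x)) :=
  act_eq_iff.1 rfl

theorem act_mem_orbitClosure (S : α → α) (p : Ultrafilter ℕ) (x : α) :
    act S p x ∈ orbitClosure S x :=
  mem_closure_of_tendsto (act_tendsto S p x) (Eventually.of_forall fun n => mem_range_self n)

theorem exists_act_of_mem_orbitClosure {S : α → α} {x y : α} (hy : y ∈ orbitClosure S x) :
    ∃ p : Ultrafilter ℕ, act S p x = y := by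
  have h : NeBot (comap (fun n => S^[n] x) (𝓝 y)) := by
    rw [comap_neBot_iff]
    intro t ht
    rcases mem_closure_iff_nhds.1 hy t ht with ⟨z, hzt, n, rfl⟩
    exact ⟨n, hzt⟩
  obtain ⟨u, hu⟩ := Ultrafilter.exists_le (comap (fun n => S^[n] x) (𝓝 y))
  exact ⟨u, act_eq_iff.2 (le_trans (map_mono hu) map_comap_le)⟩

theorem act_push {S : α → α} {S' : β → β} {g : α → β} (hg : Continuous g)
    (hcomm : ∀ a, g (S a) = S' (g a)) (p : Ultrafilter ℕ) (x : α) :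
    g (act S p x) = act S' p (g x) := by
  have hiter : ∀ n a, g (S^[n] a) = S'^[n] (g a) := by
    intro n
    induction n with
    | zero => simp
    | succ n ih => intro a; rw [Function.iterate_succ_apply, Function.iterate_succ_apply, ih,
        hcomm]
  symm
  rw [act_eq_iff]
  have := (hg.tendsto _).comp (act_tendsto S p x)
  refine this.congr fun n => ?_
  exact hiter n x

theorem act_pair {S : α → α} {S' : β → β} (p : Ultrafilter ℕ) (x : α) (y : β) :
    act (Prod.map S S') p (x, y) = (act S p x, act S' p y) := by
  rw [act_eq_iff]
  have h : ∀ n : ℕ, (Prod.map S S')^[n] (x, y) = (S^[n] x, S'^[n] y) := by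
    intro n; rw [Prod.map_iterate]; rfl
  refine Tendsto.congr (fun n => (h n).symm) ?_
  rw [nhds_prod_eq]
  exact Tendsto.prodMk (act_tendsto S p x) (act_tendsto S' p y)

theorem act_act {S : α → α} (hS : Continuous S) (p q : Ultrafilter ℕ) (x : α) :
    act S p (act S q x) = act S (p + q) x := by
  symm
  rw [act_eq_iff]
  intro W hW
  rcases mem_nhds_iff.1 hW with ⟨V, hVW, hVo, hLV⟩
  have hp : ∀ᶠ n in (p : Filter ℕ), S^[n] (act S q x) ∈ V :=
    (act_tendsto S p (act S q x)) (hVo.mem_nhds hLV)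
  have : ∀ᶠ k in ((p + q : Ultrafilter ℕ) : Filter ℕ), S^[k] x ∈ V := by
    rw [Ultrafilter.eventually_add]
    refine hp.mono fun n hn => ?_
    have hcont : Continuous (S^[n]) := hS.iterate n
    have ht : Tendsto (fun m => S^[n] (S^[m] x)) q (𝓝 (S^[n] (act S q x))) :=
      (hcont.tendsto _).comp (act_tendsto S q x)
    filter_upwards [ht (hVo.mem_nhds hn)] with m hm
    rwa [Function.iterate_add_apply]
  exact mem_of_superset this hVW

theorem isProximalPair_iff {S : α → α} {x y : α} :
    IsProximalPair S x y ↔ ∃ p : Ultrafilter ℕ, act S p x = act S p y := by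
  have hr : (fun n : ℕ => (Prod.map S S)^[n] (x, y)) = fun n : ℕ => (S^[n] x, S^[n] y) := by
    funext n; rw [Prod.map_iterate]; rfl
  constructor
  · rintro ⟨z, hz⟩
    have hz' : (z, z) ∈ closure (Set.range fun n : ℕ => (Prod.map S S)^[n] (x, y)) := by
      rw [hr]; exact hz
    obtain ⟨p, hp⟩ := exists_act_of_mem_orbitClosure hz'
    rw [act_pair] at hp
    refine ⟨p, ?_⟩
    have h1 := congrArg Prod.fst hp
    have h2 := congrArg Prod.snd hp
    simp only at h1 h2
    rw [h1, h2]
  · rintro ⟨p, hp⟩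
    refine ⟨act S p x, ?_⟩
    have := act_mem_orbitClosure (Prod.map S S) p (x, y)
    rw [orbitClosure, hr] at this
    have h2 : (act (Prod.map S S) p (x, y)) = (act S p x, act S p x) := by
      rw [act_pair, ← hp]
    rw [h2] at this
    exact this

theorem act_continuous (S : α → α) (x : α) : Continuous fun p : Ultrafilter ℕ => act S p x :=
  continuous_ultrafilter_extend _

/-- The idempotent-ultrafilter characterisation of distal points. -/
theorem isDistalPoint_iff_idem {S : α → α} (hS : Continuous S) {x : α} :
    IsDistalPoint S x ↔ ∀ p : Ultrafilter ℕ, p + p = p → act S p x = x := by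
  constructor
  · intro hd p hp
    refine hd (act S p x) (act_mem_orbitClosure S p x) ?_
    refine isProximalPair_iff.2 ⟨p, ?_⟩
    rw [act_act hS, hp]
  · intro h y hy hprox
    obtain ⟨q, hq⟩ := exists_act_of_mem_orbitClosure hy
    obtain ⟨r, hr⟩ := isProximalPair_iff.1 hprox
    set E : Set (Ultrafilter ℕ) := {u | act S u x = act S u y} with hE
    have hEc : IsClosed E := isClosed_eq (act_continuous S x) (act_continuous S y)
    have hEadd : ∀ u ∈ E, ∀ v ∈ E, u + v ∈ E := by
      intro u hu v hv
      have : act S (u + v) x = act S u (act S v x) := (act_act hS u v x).symm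
      rw [hE, mem_setOf_eq, this, hv, act_act hS]
    -- get an idempotent in E
    obtain ⟨u, huE, huu⟩ := exists_idempotent_in_compact_add_subsemigroup
      Ultrafilter.continuous_add_left E ⟨r, hr⟩ (hEc.isCompact) hEadd
    have hux : act S u x = x := h u huu
    have huy : act S u y = x := by rw [← huE]; exact hux
    -- w = q + u fixes y and lies in E
    have hwy : act S (q + u) y = y := by
      rw [← act_act hS, huy, hq]
    have hwE : (q + u) ∈ E := by
      have : act S (q + u) x = y := by rw [← act_act hS, hux, hq]
      rw [hE, mem_setOf_eq, this, hwy]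
    set F : Set (Ultrafilter ℕ) := E ∩ {v | act S v y = y} with hF
    have hFc : IsClosed F := hEc.inter (isClosed_eq (act_continuous S y) continuous_const)
    have hFadd : ∀ u' ∈ F, ∀ v ∈ F, u' + v ∈ F := by
      rintro u' ⟨hu'E, hu'y⟩ v ⟨hvE, hvy⟩
      refine ⟨hEadd _ hu'E _ hvE, ?_⟩
      rw [mem_setOf_eq, ← act_act hS, hvy, hu'y]
    obtain ⟨v, hvF, hvv⟩ := exists_idempotent_in_compact_add_subsemigroup
      Ultrafilter.continuous_add_left F ⟨q + u, hwE, hwy⟩ (hFc.isCompact) hFadd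
    have h1 : act S v y = y := hvF.2
    have h2 : act S v x = act S v y := hvF.1
    rw [← h1, ← h2, h v hvv]

/-- Equivariant continuous images of distal points are distal. -/
theorem IsDistalPoint.map {S : α → α} {S' : β → β} {g : α → β} (hS : Continuous S)
    (hS' : Continuous S') (hg : Continuous g) (hcomm : ∀ a, g (S a) = S' (g a)) {x : α}
    (hx : IsDistalPoint S x) : IsDistalPoint S' (g x) := by
  rw [isDistalPoint_iff_idem hS'] at *
  intro p hp
  rw [← act_push hg hcomm, (isDistalPoint_iff_idem hS).1 hx p hp]

theorem IsDistalPoint.prod {S : α → α} {S' : β → β} (hS : Continuous S) (hS' : Continuous S')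
    {x : α} {y : β} (hx : IsDistalPoint S x) (hy : IsDistalPoint S' y) :
    IsDistalPoint (Prod.map S S') (x, y) := by
  rw [isDistalPoint_iff_idem (hS.prodMap hS')]
  intro p hp
  rw [act_pair, (isDistalPoint_iff_idem hS).1 hx p hp, (isDistalPoint_iff_idem hS').1 hy p hp]

end Act

section Hyper

set_option linter.unusedSectionVars false

variable {X : Type*} [MetricSpace X] [CompactSpace X]

theorem coe_TK (T : X → X) (hT : Continuous T) (C : NonemptyCompacts X) :
    (TK T hT C : Set X) = T '' (C : Set X) := rfl

theorem coe_TK_iterate (T : X → X) (hT : Continuous T) (n : ℕ) (C : NonemptyCompacts X) :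
    (((TK T hT)^[n] C : NonemptyCompacts X) : Set X) = T^[n] '' (C : Set X) := by
  induction n with
  | zero => simp
  | succ n ih =>
    rw [Function.iterate_succ_apply', coe_TK, ih, ← Set.image_comp, ← Function.iterate_succ']


theorem mem_coe_TK_iterate {T : X → X} {hT : Continuous T} {n : ℕ} {C : NonemptyCompacts X}
    {y : X} : y ∈ (((TK T hT)^[n] C : NonemptyCompacts X) : Set X) ↔
      y ∈ T^[n] '' (C : Set X) := by rw [coe_TK_iterate]

theorem hEdist_ne_top {s t : Set X} (hs : s.Nonempty) (ht : t.Nonempty) :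
    EMetric.hausdorffEdist s t ≠ ⊤ :=
  Metric.hausdorffEdist_ne_top_of_nonempty_of_bounded hs ht
    (isCompact_univ.isBounded.subset (subset_univ s))
    (isCompact_univ.isBounded.subset (subset_univ t))

theorem exists_close {C D : NonemptyCompacts X} {r : ℝ} (h : dist C D < r) {x : X}
    (hx : x ∈ (C : Set X)) : ∃ y ∈ (D : Set X), dist x y < r :=
  Metric.exists_dist_lt_of_hausdorffDist_lt hx
    (by rwa [NonemptyCompacts.dist_eq] at h) (hEdist_ne_top C.nonempty D.nonempty)

theorem dist_le_of_mem_dist {C D : NonemptyCompacts X} {r : ℝ} (hr : 0 ≤ r)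
    (h1 : ∀ x ∈ (C : Set X), ∃ y ∈ (D : Set X), dist x y ≤ r)
    (h2 : ∀ y ∈ (D : Set X), ∃ x ∈ (C : Set X), dist y x ≤ r) : dist C D ≤ r := by
  rw [NonemptyCompacts.dist_eq]
  exact Metric.hausdorffDist_le_of_mem_dist hr h1 h2

theorem isOpen_subsets {U : Set X} (hU : IsOpen U) :
    IsOpen {C : NonemptyCompacts X | (C : Set X) ⊆ U} := by
  rw [Metric.isOpen_iff]
  intro C hC
  obtain ⟨δ, hδ, hsub⟩ := C.isCompact.exists_thickening_subset_open hU hC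
  refine ⟨δ, hδ, fun D hD => ?_⟩
  rw [mem_ball] at hD
  intro x hx
  obtain ⟨y, hy, hxy⟩ := exists_close hD hx
  exact hsub (Metric.mem_thickening_iff.2 ⟨y, hy, hxy⟩)

theorem isOpen_hits {U : Set X} (hU : IsOpen U) :
    IsOpen {C : NonemptyCompacts X | (U ∩ (C : Set X)).Nonempty} := by
  rw [Metric.isOpen_iff]
  intro C hC
  obtain ⟨x, hxU, hxC⟩ := hC
  obtain ⟨δ, hδ, hball⟩ := Metric.isOpen_iff.1 hU x hxU
  refine ⟨δ, hδ, fun D hD => ?_⟩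
  rw [mem_ball, dist_comm] at hD
  obtain ⟨y, hy, hxy⟩ := exists_close hD hxC
  exact ⟨y, hball (by rwa [mem_ball, dist_comm]), hy⟩

/-- A point as a nonempty compact set. -/
def pt (x : X) : NonemptyCompacts X := ⟨⟨{x}, isCompact_singleton⟩, Set.singleton_nonempty x⟩

theorem coe_pt (x : X) : (pt x : Set X) = {x} := rfl

/-- A finite nonempty set as a nonempty compact set. -/
def finC {s : Set X} (hs : s.Finite) (hne : s.Nonempty) : NonemptyCompacts X :=
  ⟨⟨s, hs.isCompact⟩, hne⟩

/-- The net lemma: a finite family of small balls meeting `C₀` and covering it, such that any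
compact set contained in the union and meeting every ball is close to `C₀`. -/
theorem exists_net (C₀ : NonemptyCompacts X) {ε : ℝ} (hε : 0 < ε) :
    ∃ t : Set X, t.Finite ∧ t.Nonempty ∧
      ((C₀ : Set X) ⊆ ⋃ x ∈ t, ball x (ε / 4)) ∧
      ∀ s : Set X, s.Nonempty → (s ⊆ ⋃ x ∈ t, ball x (ε / 4)) →
        (∀ x ∈ t, (ball x (ε / 4) ∩ s).Nonempty) →
        Metric.hausdorffDist s (C₀ : Set X) < ε := by
  have h4 : 0 < ε / 4 := by linarith
  obtain ⟨t0, ht0f, ht0⟩ := (Metric.totallyBounded_iff).1 (C₀.isCompact.totallyBounded) (ε / 4) h4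
  set t : Set X := {x ∈ t0 | (ball x (ε / 4) ∩ (C₀ : Set X)).Nonempty} with ht
  have htf : t.Finite := ht0f.subset (sep_subset _ _)
  have hcover : (C₀ : Set X) ⊆ ⋃ x ∈ t, ball x (ε / 4) := by
    intro c hc
    obtain ⟨x, hx, hcx⟩ := Set.mem_iUnion₂.1 (ht0 hc)
    exact Set.mem_iUnion₂.2 ⟨x, ⟨hx, ⟨c, hcx, hc⟩⟩, hcx⟩
  have htne : t.Nonempty := by
    obtain ⟨c, hc⟩ := C₀.nonempty
    obtain ⟨x, hx, _⟩ := Set.mem_iUnion₂.1 (hcover hc)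
    exact ⟨x, hx⟩
  refine ⟨t, htf, htne, hcover, fun s hsne hscov hsmeet => ?_⟩
  have hle : Metric.hausdorffDist s (C₀ : Set X) ≤ ε / 2 := by
    apply Metric.hausdorffDist_le_of_mem_dist (by linarith)
    · intro d hd
      obtain ⟨x, hx, hdx⟩ := Set.mem_iUnion₂.1 (hscov hd)
      obtain ⟨c, hcx, hc⟩ := hx.2
      refine ⟨c, hc, ?_⟩
      have := dist_triangle d x c
      rw [mem_ball] at hdx hcx
      rw [dist_comm x c] at *
      calc dist d c ≤ dist d x + dist x c := dist_triangle d x c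
        _ ≤ ε / 4 + ε / 4 := by rw [dist_comm x c]; exact add_le_add hdx.le hcx.le
        _ = ε / 2 := by ring
    · intro c hc
      obtain ⟨x, hx, hcx⟩ := Set.mem_iUnion₂.1 (hcover hc)
      obtain ⟨d, hdx, hd⟩ := hsmeet x hx
      refine ⟨d, hd, ?_⟩
      rw [mem_ball] at hcx hdx
      calc dist c d ≤ dist c x + dist x d := dist_triangle c x d
        _ ≤ ε / 4 + ε / 4 := add_le_add hcx.le (by rw [dist_comm]; exact hdx.le)
        _ = ε / 2 := by ring
  linarith

/-- `TK` of a continuous map on a compact metric space is continuous. -/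
theorem continuous_TK (T : X → X) (hT : Continuous T) : Continuous (TK T hT) := by
  rw [Metric.continuous_iff]
  intro C ε hε
  obtain ⟨δ, hδ, hu⟩ := (Metric.uniformContinuous_iff).1 (CompactSpace.uniformContinuous_of_continuous hT) (ε / 2) (by linarith)
  refine ⟨δ, hδ, fun D hD => ?_⟩
  have hle : dist (TK T hT D) (TK T hT C) ≤ ε / 2 := by
    apply dist_le_of_mem_dist (by linarith)
    · rintro x ⟨a, ha, rfl⟩
      obtain ⟨b, hb, hab⟩ := exists_close hD ha
      exact ⟨T b, mem_image_of_mem T hb, (hu hab).le⟩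
    · rintro y ⟨b, hb, rfl⟩
      rw [dist_comm D C] at hD
      obtain ⟨a, ha, hba⟩ := exists_close hD hb
      exact ⟨T a, mem_image_of_mem T ha, (hu hba).le⟩
  linarith

/-- The union of two nonempty compacts. -/
def join (A B : NonemptyCompacts X) : NonemptyCompacts X :=
  ⟨⟨(A : Set X) ∪ (B : Set X), A.isCompact.union B.isCompact⟩, A.nonempty.inl⟩

theorem coe_join (A B : NonemptyCompacts X) :
    (join A B : Set X) = (A : Set X) ∪ (B : Set X) := rfl

theorem continuous_join : Continuous fun p : NonemptyCompacts X × NonemptyCompacts X =>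
    join p.1 p.2 := by
  rw [Metric.continuous_iff]
  rintro ⟨A, B⟩ ε hε
  refine ⟨ε / 2, by linarith, ?_⟩
  rintro ⟨A', B'⟩ hd
  rw [Prod.dist_eq] at hd
  have hA : dist A' A < ε / 2 := lt_of_le_of_lt (le_max_left _ _) hd
  have hB : dist B' B < ε / 2 := lt_of_le_of_lt (le_max_right _ _) hd
  have hle : dist (join A' B') (join A B) ≤ ε / 2 := by
    apply dist_le_of_mem_dist (by linarith)
    · rintro x (hx | hx)
      · obtain ⟨y, hy, hxy⟩ := exists_close hA hx
        exact ⟨y, Or.inl hy, hxy.le⟩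
      · obtain ⟨y, hy, hxy⟩ := exists_close hB hx
        exact ⟨y, Or.inr hy, hxy.le⟩
    · rintro y (hy | hy)
      · rw [dist_comm A' A] at hA
        obtain ⟨x, hx, hyx⟩ := exists_close hA hy
        exact ⟨x, Or.inl hx, hyx.le⟩
      · rw [dist_comm B' B] at hB
        obtain ⟨x, hx, hyx⟩ := exists_close hB hy
        exact ⟨x, Or.inr hx, hyx.le⟩
  linarith

theorem TK_join (T : X → X) (hT : Continuous T) (A B : NonemptyCompacts X) :
    TK T hT (join A B) = join (TK T hT A) (TK T hT B) := by
  apply NonemptyCompacts.ext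
  simp only [coe_TK, coe_join, Set.image_union]

theorem continuous_pt : Continuous (pt : X → NonemptyCompacts X) := by
  rw [Metric.continuous_iff]
  intro a ε hε
  refine ⟨ε, hε, fun b hb => ?_⟩
  calc dist (pt b) (pt a) ≤ dist b a := by
        apply dist_le_of_mem_dist dist_nonneg
        · rintro x (rfl : x = b)
          exact ⟨a, rfl, le_rfl⟩
        · rintro y (rfl : y = a)
          exact ⟨b, rfl, by rw [dist_comm]⟩
    _ < ε := hb

theorem TK_pt (f : X → X) (hf : Continuous f) (x : X) : TK f hf (pt x) = pt (f x) :=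
  NonemptyCompacts.ext (by simp [coe_TK, coe_pt])

section Uni

variable (X)

theorem isClosed_memGraph : IsClosed {p : X × NonemptyCompacts X | p.1 ∈ (p.2 : Set X)} := by
  have : {p : X × NonemptyCompacts X | p.1 ∈ (p.2 : Set X)} =
      (fun p : X × NonemptyCompacts X => Metric.infDist p.1 (p.2 : Set X)) ⁻¹' {0} := by
    ext p
    simp only [Set.mem_setOf_eq, Set.mem_preimage, Set.mem_singleton_iff]
    constructor
    · exact fun h => Metric.infDist_zero_of_mem h
    · intro h
      exact (p.2.isCompact.isClosed.mem_iff_infDist_zero p.2.nonempty).2 h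
  rw [this]
  exact IsClosed.preimage Metric.lipschitz_infDist.continuous isClosed_singleton

variable {X}

/-- The union map from the second hyperspace to the first. -/
def uni (𝒞 : NonemptyCompacts (NonemptyCompacts X)) : NonemptyCompacts X := by
  refine ⟨⟨⋃ D ∈ (𝒞 : Set (NonemptyCompacts X)), (D : Set X), ?_⟩, ?_⟩
  · have hB : IsCompact {p : X × NonemptyCompacts X | p.2 ∈ (𝒞 : Set (NonemptyCompacts X)) ∧
        p.1 ∈ (p.2 : Set X)} := by
      apply IsClosed.isCompact
      exact ((𝒞.isCompact.isClosed.preimage continuous_snd).inter (isClosed_memGraph X))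
    have : (⋃ D ∈ (𝒞 : Set (NonemptyCompacts X)), (D : Set X)) =
        Prod.fst '' {p : X × NonemptyCompacts X | p.2 ∈ (𝒞 : Set (NonemptyCompacts X)) ∧
          p.1 ∈ (p.2 : Set X)} := by
      ext x
      simp only [Set.mem_iUnion, Set.mem_image, Set.mem_setOf_eq, Prod.exists]
      constructor
      · rintro ⟨D, hD, hx⟩; exact ⟨x, D, ⟨hD, hx⟩, rfl⟩
      · rintro ⟨a, D, ⟨hD, ha⟩, rfl⟩; exact ⟨D, hD, ha⟩
    rw [this]
    exact hB.image continuous_fst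
  · obtain ⟨D, hD⟩ := 𝒞.nonempty
    obtain ⟨x, hx⟩ := D.nonempty
    exact ⟨x, Set.mem_biUnion hD hx⟩

theorem coe_uni (𝒞 : NonemptyCompacts (NonemptyCompacts X)) :
    (uni 𝒞 : Set X) = ⋃ D ∈ (𝒞 : Set (NonemptyCompacts X)), (D : Set X) := rfl

theorem continuous_uni : Continuous (uni : NonemptyCompacts (NonemptyCompacts X) →
    NonemptyCompacts X) := by
  rw [Metric.continuous_iff]
  intro 𝒞 ε hε
  refine ⟨ε / 2, by linarith, fun 𝒟 h𝒟 => ?_⟩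
  have hle : dist (uni 𝒟) (uni 𝒞) ≤ ε / 2 := by
    apply dist_le_of_mem_dist (by linarith)
    · intro x hx
      rw [coe_uni] at hx
      obtain ⟨D, hD, hxD⟩ := Set.mem_iUnion₂.1 hx
      obtain ⟨E, hE, hDE⟩ := exists_close h𝒟 hD
      obtain ⟨y, hy, hxy⟩ := exists_close hDE hxD
      exact ⟨y, Set.mem_biUnion hE hy, hxy.le⟩
    · intro y hy
      rw [coe_uni] at hy
      obtain ⟨E, hE, hyE⟩ := Set.mem_iUnion₂.1 hy
      rw [dist_comm] at h𝒟
      obtain ⟨D, hD, hED⟩ := exists_close h𝒟 hE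
      obtain ⟨x, hx, hyx⟩ := exists_close hED hyE
      exact ⟨x, Set.mem_biUnion hD hx, hyx.le⟩
  linarith

theorem uni_TK (T : X → X) (hT : Continuous T) (hTK : Continuous (TK T hT))
    (𝒞 : NonemptyCompacts (NonemptyCompacts X)) :
    uni (TK (TK T hT) hTK 𝒞) = TK T hT (uni 𝒞) := by
  apply NonemptyCompacts.ext
  rw [coe_uni, coe_TK, coe_TK, coe_uni]
  ext x
  simp only [Set.mem_iUnion, Set.mem_image]
  constructor
  · rintro ⟨E, hE, hx⟩
    obtain ⟨D, hD, rfl⟩ := hE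
    rw [coe_TK] at hx
    obtain ⟨a, ha, rfl⟩ := hx
    exact ⟨a, ⟨D, hD, ha⟩, rfl⟩
  · rintro ⟨a, ha, rfl⟩
    obtain ⟨D, hD, haD⟩ := ha
    exact ⟨TK T hT D, ⟨D, hD, rfl⟩, ⟨a, haD, rfl⟩⟩

end Uni

end Hyper

section Trans

variable {α : Type*} [TopologicalSpace α] {T : α → α}

theorem transitive_of_WM (h : IsWeaklyMixing T) : IsTransitive T := by
  intro U V hU hUne hV hVne
  have : Nonempty α := ⟨hUne.choose⟩
  have h2 := h (U ×ˢ univ) (V ×ˢ univ) (hU.prod isOpen_univ) (hUne.prod univ_nonempty)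
    (hV.prod isOpen_univ) (hVne.prod univ_nonempty)
  refine h2.mono ?_
  rintro n ⟨⟨a, b⟩, ⟨haU, -⟩, hpre⟩
  rw [mem_preimage, Prod.map_iterate] at hpre
  exact ⟨a, haU, hpre.1⟩

theorem WM_step (hT : Continuous T) (hWM : IsWeaklyMixing T) {U₀ V₀ U₁ V₁ : Set α}
    (hU₀ : IsOpen U₀) (hU₀n : U₀.Nonempty) (hV₀ : IsOpen V₀) (hV₀n : V₀.Nonempty)
    (hU₁ : IsOpen U₁) (hU₁n : U₁.Nonempty) (hV₁ : IsOpen V₁) (hV₁n : V₁.Nonempty) :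
    ∃ U V : Set α, IsOpen U ∧ U.Nonempty ∧ IsOpen V ∧ V.Nonempty ∧
      ∀ m : ℕ, (U ∩ T^[m] ⁻¹' V).Nonempty →
        (U₀ ∩ T^[m] ⁻¹' V₀).Nonempty ∧ (U₁ ∩ T^[m] ⁻¹' V₁).Nonempty := by
  obtain ⟨n, ⟨⟨a, b⟩, ⟨haU, hbV⟩, hpre⟩⟩ :=
    (hWM (U₀ ×ˢ V₀) (U₁ ×ˢ V₁) (hU₀.prod hV₀) (hU₀n.prod hV₀n)
      (hU₁.prod hV₁) (hU₁n.prod hV₁n)).nonempty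
  rw [mem_preimage, Prod.map_iterate] at hpre
  obtain ⟨haU₁, hbV₁⟩ := hpre
  refine ⟨U₀ ∩ T^[n] ⁻¹' U₁, V₀ ∩ T^[n] ⁻¹' V₁,
    hU₀.inter ((hT.iterate n).isOpen_preimage _ hU₁), ⟨a, haU, haU₁⟩,
    hV₀.inter ((hT.iterate n).isOpen_preimage _ hV₁), ⟨b, hbV, hbV₁⟩, ?_⟩
  rintro m ⟨x, ⟨hxU₀, hxU₁⟩, hxV⟩
  rw [mem_preimage, mem_inter_iff] at hxV
  refine ⟨⟨x, hxU₀, hxV.1⟩, ⟨T^[n] x, hxU₁, ?_⟩⟩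
  rw [mem_preimage, ← Function.iterate_add_apply, add_comm, Function.iterate_add_apply]
  exact hxV.2

theorem WM_finite (hT : Continuous T) (hWM : IsWeaklyMixing T) [Nonempty α]
    {P : Set (Set α × Set α)} (hP : P.Finite)
    (h : ∀ p ∈ P, IsOpen p.1 ∧ p.1.Nonempty ∧ IsOpen p.2 ∧ p.2.Nonempty) :
    {n : ℕ | ∀ p ∈ P, (p.1 ∩ T^[n] ⁻¹' p.2).Nonempty}.Infinite := by
  suffices h' : ∃ U V : Set α, IsOpen U ∧ U.Nonempty ∧ IsOpen V ∧ V.Nonempty ∧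
      ∀ n : ℕ, (U ∩ T^[n] ⁻¹' V).Nonempty → ∀ p ∈ P, (p.1 ∩ T^[n] ⁻¹' p.2).Nonempty by
    obtain ⟨U, V, hU, hUn, hV, hVn, himp⟩ := h'
    exact ((transitive_of_WM hWM) U V hU hUn hV hVn).mono fun n hn => himp n hn
  revert h
  refine Set.Finite.induction_on
    (motive := fun Q _ => (∀ p ∈ Q, IsOpen p.1 ∧ p.1.Nonempty ∧ IsOpen p.2 ∧ p.2.Nonempty) →
      ∃ U V : Set α, IsOpen U ∧ U.Nonempty ∧ IsOpen V ∧ V.Nonempty ∧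
        ∀ n : ℕ, (U ∩ T^[n] ⁻¹' V).Nonempty → ∀ p ∈ Q, (p.1 ∩ T^[n] ⁻¹' p.2).Nonempty)
    P hP (fun _ => ⟨univ, univ, isOpen_univ, univ_nonempty, isOpen_univ, univ_nonempty,
      fun n _ p hp => absurd hp (notMem_empty p)⟩) ?_
  rintro q Q hq hQ ih h
  obtain ⟨U, V, hU, hUn, hV, hVn, himp⟩ :=
    ih fun p hp => h p (mem_insert_of_mem q hp)
  obtain ⟨hq1, hq1n, hq2, hq2n⟩ := h q (mem_insert q Q)
  obtain ⟨U', V', hU', hU'n, hV', hV'n, himp'⟩ :=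
    WM_step hT hWM hU hUn hV hVn hq1 hq1n hq2 hq2n
  refine ⟨U', V', hU', hU'n, hV', hV'n, fun n hn p hp => ?_⟩
  rcases mem_insert_iff.1 hp with rfl | hp
  · exact (himp' n hn).2
  · exact himp n (himp' n hn).1 p hp

end Trans

section Banks

variable {X : Type*} [MetricSpace X] [CompactSpace X] {T : X → X}

theorem WM_TK_of_WM (hT : Continuous T) (hWM : IsWeaklyMixing T) :
    IsWeaklyMixing (TK T hT) := by
  intro 𝒰 𝒱 h𝒰 h𝒰n h𝒱 h𝒱n
  obtain ⟨⟨C1, C2⟩, hC⟩ := h𝒰n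
  obtain ⟨⟨D1, D2⟩, hD⟩ := h𝒱n
  have hX : Nonempty X := ⟨C1.nonempty.choose⟩
  obtain ⟨ε, hε, hballU⟩ := Metric.isOpen_iff.1 h𝒰 _ hC
  obtain ⟨δ, hδ, hballV⟩ := Metric.isOpen_iff.1 h𝒱 _ hD
  have hρ : 0 < min ε δ := lt_min hε hδ
  set ρ := min ε δ with hρdef
  obtain ⟨t1, ht1f, ht1n, ht1cov, ht1close⟩ := exists_net C1 hρ
  obtain ⟨t2, ht2f, ht2n, ht2cov, ht2close⟩ := exists_net C2 hρ
  obtain ⟨s1, hs1f, hs1n, hs1cov, hs1close⟩ := exists_net D1 hρ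
  obtain ⟨s2, hs2f, hs2n, hs2cov, hs2close⟩ := exists_net D2 hρ
  set bl : X → Set X := fun x => ball x (ρ / 4) with hbl
  set P : Set (Set X × Set X) := (bl '' t1) ×ˢ (bl '' s1) ∪ (bl '' t2) ×ˢ (bl '' s2) with hP
  have hPf : P.Finite :=
    ((ht1f.image bl).prod (hs1f.image bl)).union ((ht2f.image bl).prod (hs2f.image bl))
  have hPo : ∀ p ∈ P, IsOpen p.1 ∧ p.1.Nonempty ∧ IsOpen p.2 ∧ p.2.Nonempty := by
    rintro ⟨u, v⟩ (⟨⟨x, hx, rfl⟩, ⟨y, hy, rfl⟩⟩ | ⟨⟨x, hx, rfl⟩, ⟨y, hy, rfl⟩⟩) <;>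
      exact ⟨isOpen_ball, nonempty_ball.2 (by linarith), isOpen_ball,
        nonempty_ball.2 (by linarith)⟩
  refine (WM_finite hT hWM hPf hPo).mono ?_
  intro n hn
  have hwit : ∀ t s : Set X, t.Finite → t.Nonempty → s.Finite → s.Nonempty →
      (∀ x ∈ t, ∀ y ∈ s, (bl x ∩ T^[n] ⁻¹' bl y).Nonempty) →
      ∃ K : NonemptyCompacts X,
        ((K : Set X) ⊆ ⋃ x ∈ t, bl x) ∧ (∀ x ∈ t, (bl x ∩ (K : Set X)).Nonempty) ∧
        (T^[n] '' (K : Set X) ⊆ ⋃ y ∈ s, bl y) ∧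
        (∀ y ∈ s, (bl y ∩ T^[n] '' (K : Set X)).Nonempty) := by
    intro t s htf htn hsf hsn hpick
    classical
    set f : X × X → X := fun q =>
      if h : (bl q.1 ∩ T^[n] ⁻¹' bl q.2).Nonempty then h.choose else htn.choose with hf
    have hfspec : ∀ x ∈ t, ∀ y ∈ s, f (x, y) ∈ bl x ∩ T^[n] ⁻¹' bl y := by
      intro x hx y hy
      have h := hpick x hx y hy
      simp only [hf, dif_pos h]
      exact h.choose_spec
    refine ⟨finC ((htf.prod hsf).image f) ((htn.prod hsn).image f), ?_, ?_, ?_, ?_⟩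
    · rintro z ⟨⟨x, y⟩, ⟨hx, hy⟩, rfl⟩
      exact Set.mem_biUnion hx (hfspec x hx y hy).1
    · intro x hx
      obtain ⟨y, hy⟩ := hsn
      exact ⟨f (x, y), (hfspec x hx y hy).1, ⟨(x, y), ⟨hx, hy⟩, rfl⟩⟩
    · rintro z ⟨w, ⟨⟨x, y⟩, ⟨hx, hy⟩, rfl⟩, rfl⟩
      exact Set.mem_biUnion hy (hfspec x hx y hy).2
    · intro y hy
      obtain ⟨x, hx⟩ := htn
      exact ⟨T^[n] (f (x, y)), (hfspec x hx y hy).2,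
        Set.mem_image_of_mem _ ⟨(x, y), ⟨hx, hy⟩, rfl⟩⟩
  obtain ⟨K1, hK1a, hK1b, hK1c, hK1d⟩ := hwit t1 s1 ht1f ht1n hs1f hs1n
    (fun x hx y hy => hn (bl x, bl y)
      (Or.inl ⟨Set.mem_image_of_mem bl hx, Set.mem_image_of_mem bl hy⟩))
  obtain ⟨K2, hK2a, hK2b, hK2c, hK2d⟩ := hwit t2 s2 ht2f ht2n hs2f hs2n
    (fun x hx y hy => hn (bl x, bl y)
      (Or.inr ⟨Set.mem_image_of_mem bl hx, Set.mem_image_of_mem bl hy⟩))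
  refine ⟨(K1, K2), hballU ?_, ?_⟩
  · rw [mem_ball, Prod.dist_eq, max_lt_iff]
    constructor
    · rw [NonemptyCompacts.dist_eq]
      exact lt_of_lt_of_le (ht1close _ K1.nonempty hK1a (fun x hx => hK1b x hx))
        (min_le_left _ _)
    · rw [NonemptyCompacts.dist_eq]
      exact lt_of_lt_of_le (ht2close _ K2.nonempty hK2a (fun x hx => hK2b x hx))
        (min_le_left _ _)
  · rw [Set.mem_preimage, Prod.map_iterate, Prod.map_apply]
    apply hballV
    rw [mem_ball, Prod.dist_eq, max_lt_iff]
    have him1 : (((TK T hT)^[n] K1 : NonemptyCompacts X) : Set X) = T^[n] '' (K1 : Set X) :=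
      coe_TK_iterate T hT n K1
    have him2 : (((TK T hT)^[n] K2 : NonemptyCompacts X) : Set X) = T^[n] '' (K2 : Set X) :=
      coe_TK_iterate T hT n K2
    constructor
    · rw [NonemptyCompacts.dist_eq, him1]
      exact lt_of_lt_of_le
        (hs1close _ (K1.nonempty.image _) hK1c (fun y hy => hK1d y hy)) (min_le_right _ _)
    · rw [NonemptyCompacts.dist_eq, him2]
      exact lt_of_lt_of_le
        (hs2close _ (K2.nonempty.image _) hK2c (fun y hy => hK2d y hy)) (min_le_right _ _)

theorem WM_of_transitive_TK (hT : Continuous T) (hTs : Surjective T)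
    (hK : IsTransitive (TK T hT)) : IsWeaklyMixing T := by
  have lemb : ∀ D V1 V2 : Set X, IsOpen D → D.Nonempty → IsOpen V1 → V1.Nonempty →
      IsOpen V2 → V2.Nonempty →
      {k : ℕ | ∃ x1 ∈ D, ∃ x2 ∈ D, T^[k] x1 ∈ V1 ∧ T^[k] x2 ∈ V2}.Infinite := by
    intro D V1 V2 hD hDn hV1 hV1n hV2 hV2n
    obtain ⟨v1, hv1⟩ := hV1n
    obtain ⟨v2, hv2⟩ := hV2n
    set 𝒱 : Set (NonemptyCompacts X) := {C | (C : Set X) ⊆ V1 ∪ V2} ∩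
      ({C | (V1 ∩ (C : Set X)).Nonempty} ∩ {C | (V2 ∩ (C : Set X)).Nonempty}) with h𝒱def
    have h𝒱 : IsOpen 𝒱 := (isOpen_subsets (hV1.union hV2)).inter
      ((isOpen_hits hV1).inter (isOpen_hits hV2))
    have h𝒱n : 𝒱.Nonempty := by
      refine ⟨finC ((Set.finite_singleton v2).insert v1)
        (Set.insert_nonempty v1 {v2}), ?_, ⟨v1, hv1, Set.mem_insert v1 {v2}⟩,
        ⟨v2, hv2, Set.mem_insert_of_mem v1 rfl⟩⟩
      rintro z (rfl | rfl)
      · exact Or.inl hv1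
      · exact Or.inr hv2
    have h𝒰 : IsOpen {C : NonemptyCompacts X | (C : Set X) ⊆ D} := isOpen_subsets hD
    have h𝒰n : {C : NonemptyCompacts X | (C : Set X) ⊆ D}.Nonempty := by
      refine ⟨pt hDn.choose, ?_⟩
      rw [mem_setOf_eq, coe_pt]
      exact Set.singleton_subset_iff.2 hDn.choose_spec
    refine (hK _ 𝒱 h𝒰 h𝒰n h𝒱 h𝒱n).mono ?_
    rintro k ⟨K, hKD, hKpre⟩
    rw [Set.mem_preimage, h𝒱def] at hKpre
    obtain ⟨-, h1, h2⟩ := hKpre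
    obtain ⟨y1, hy1V, hy1K⟩ := h1
    obtain ⟨y2, hy2V, hy2K⟩ := h2
    rw [mem_coe_TK_iterate] at hy1K hy2K
    obtain ⟨x1, hx1K, rfl⟩ := hy1K
    obtain ⟨x2, hx2K, rfl⟩ := hy2K
    exact ⟨x1, hKD hx1K, x2, hKD hx2K, hy1V, hy2V⟩
  have htrans : IsTransitive T := by
    intro U V hU hUn hV hVn
    refine (lemb U V V hU hUn hV hVn hV hVn).mono ?_
    rintro k ⟨x1, hx1U, -, -, hx1V, -⟩
    exact ⟨x1, hx1U, hx1V⟩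
  intro 𝒜 ℬ h𝒜 h𝒜n hℬ hℬn
  obtain ⟨⟨a1, a2⟩, ha⟩ := h𝒜n
  obtain ⟨⟨b1, b2⟩, hb⟩ := hℬn
  obtain ⟨U1, U2, hU1, hU2, ha1, ha2, hUsub⟩ := isOpen_prod_iff.1 h𝒜 a1 a2 ha
  obtain ⟨V1, V2, hV1, hV2, hb1, hb2, hVsub⟩ := isOpen_prod_iff.1 hℬ b1 b2 hb
  obtain ⟨m, c, hcU1, hcU2⟩ := (htrans U1 U2 hU1 ⟨a1, ha1⟩ hU2 ⟨a2, ha2⟩).nonempty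
  have hDo : IsOpen (U1 ∩ T^[m] ⁻¹' U2) := hU1.inter ((hT.iterate m).isOpen_preimage _ hU2)
  have hDn : (U1 ∩ T^[m] ⁻¹' U2).Nonempty := ⟨c, hcU1, hcU2⟩
  have hV2o : IsOpen (T^[m] ⁻¹' V2) := (hT.iterate m).isOpen_preimage _ hV2
  have hV2n : (T^[m] ⁻¹' V2).Nonempty := by
    obtain ⟨w, hw⟩ := (hTs.iterate m) b2
    exact ⟨w, by rw [Set.mem_preimage, hw]; exact hb2⟩
  refine (lemb _ V1 (T^[m] ⁻¹' V2) hDo hDn hV1 ⟨b1, hb1⟩ hV2o hV2n).mono ?_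
  rintro k ⟨x1, hx1D, x2, hx2D, hkx1, hkx2⟩
  refine ⟨(x1, T^[m] x2), hUsub ⟨hx1D.1, hx2D.2⟩, ?_⟩
  rw [Set.mem_preimage, Prod.map_iterate, Prod.map_apply]
  refine hVsub ⟨hkx1, ?_⟩
  show T^[k] (T^[m] x2) ∈ V2
  rw [← Function.iterate_add_apply, add_comm, Function.iterate_add_apply]
  exact hkx2

end Banks

section Density

set_option linter.unusedSectionVars false

variable {X : Type*} [MetricSpace X] [CompactSpace X]

theorem distal_join {T : X → X} (hT : Continuous T) (hTK : Continuous (TK T hT))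
    {A B : NonemptyCompacts X} (hA : IsDistalPoint (TK T hT) A)
    (hB : IsDistalPoint (TK T hT) B) : IsDistalPoint (TK T hT) (join A B) :=
  (hA.prod hTK hTK hB).map (hTK.prodMap hTK) hTK continuous_join
    (fun p => (TK_join T hT p.1 p.2).symm)

theorem dense_distal_of_forall {T : X → X} (hT : Continuous T) (hTK : Continuous (TK T hT))
    (h : ∀ U : Set X, IsOpen U → U.Nonempty → ∃ C : NonemptyCompacts X,
      IsDistalPoint (TK T hT) C ∧ (C : Set X) ⊆ U) :
    Dense {C : NonemptyCompacts X | IsDistalPoint (TK T hT) C} := by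
  rw [Metric.dense_iff]
  intro C₀ r hr
  obtain ⟨t, htf, htn, -, hclose⟩ := exists_net C₀ hr
  have key : ∀ s : Set X, s.Finite → s.Nonempty →
      ∃ C : NonemptyCompacts X, IsDistalPoint (TK T hT) C ∧
        ((C : Set X) ⊆ ⋃ x ∈ s, ball x (r / 4)) ∧
        ∀ x ∈ s, (ball x (r / 4) ∩ (C : Set X)).Nonempty := by
    intro s hsf
    refine Set.Finite.induction_on (motive := fun s _ => s.Nonempty → ∃ C : NonemptyCompacts X,
      IsDistalPoint (TK T hT) C ∧ ((C : Set X) ⊆ ⋃ x ∈ s, ball x (r / 4)) ∧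
      ∀ x ∈ s, (ball x (r / 4) ∩ (C : Set X)).Nonempty) s hsf
      (fun hne => absurd hne (by simp)) ?_
    rintro a s ha hsf' ih -
    obtain ⟨Ca, hCa, hCasub⟩ :=
      h (ball a (r / 4)) isOpen_ball (nonempty_ball.2 (by linarith))
    rcases s.eq_empty_or_nonempty with rfl | hsn
    · refine ⟨Ca, hCa, by simpa using hCasub, ?_⟩
      intro x hx
      rcases hx with rfl | hx
      · obtain ⟨c, hc⟩ := Ca.nonempty
        exact ⟨c, hCasub hc, hc⟩
      · exact absurd hx (Set.notMem_empty x)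
    · obtain ⟨Cs, hCs, hCssub, hCshits⟩ := ih hsn
      refine ⟨join Ca Cs, distal_join hT hTK hCa hCs, ?_, ?_⟩
      · rw [coe_join, Set.biUnion_insert]
        exact Set.union_subset_union hCasub hCssub
      · intro x hx
        rcases hx with rfl | hx
        · obtain ⟨c, hc⟩ := Ca.nonempty
          exact ⟨c, hCasub hc, Or.inl hc⟩
        · obtain ⟨y, hy1, hy2⟩ := hCshits x hx
          exact ⟨y, hy1, Or.inr hy2⟩
  obtain ⟨C, hC, hsub, hhits⟩ := key t htf htn
  refine ⟨C, ?_, hC⟩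
  rw [mem_ball, NonemptyCompacts.dist_eq]
  exact hclose _ C.nonempty hsub fun x hx => hhits x hx

theorem forall_of_dense {T : X → X} {hT : Continuous T}
    (hDense : Dense {C : NonemptyCompacts X | IsDistalPoint (TK T hT) C}) :
    ∀ U : Set X, IsOpen U → U.Nonempty → ∃ C : NonemptyCompacts X,
      IsDistalPoint (TK T hT) C ∧ (C : Set X) ⊆ U := by
  intro U hU hUn
  obtain ⟨C, hC1, hC2⟩ := hDense.exists_mem_open (isOpen_subsets hU)
    ⟨pt hUn.choose, by
      rw [mem_setOf_eq, coe_pt]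
      exact Set.singleton_subset_iff.2 hUn.choose_spec⟩
  exact ⟨C, hC1, hC2⟩

end Density

theorem dense_distal_sets_iff_hyperspace {X : Type*} [MetricSpace X] [CompactSpace X]
    (T : X → X) (hT : Continuous T) (hTs : Surjective T)
    (hTK : Continuous (TK T hT)) :
    ((IsWeaklyMixing T ∧ ∀ U : Set X, IsOpen U → U.Nonempty →
        ∃ C : NonemptyCompacts X, IsDistalPoint (TK T hT) C ∧ (C : Set X) ⊆ U) ↔
      (IsWeaklyMixing (TK T hT) ∧
        Dense {C : NonemptyCompacts X | IsDistalPoint (TK T hT) C})) ∧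
    ((IsWeaklyMixing (TK T hT) ∧
        Dense {C : NonemptyCompacts X | IsDistalPoint (TK T hT) C}) ↔
      (IsWeaklyMixing (TK T hT) ∧
        ∀ U : Set (NonemptyCompacts X), IsOpen U → U.Nonempty →
          ∃ C : NonemptyCompacts (NonemptyCompacts X),
            IsDistalPoint (TK (TK T hT) hTK) C ∧ (C : Set (NonemptyCompacts X)) ⊆ U)) := by
  have hTKK : Continuous (TK (TK T hT) hTK) := continuous_TK _ hTK
  constructor
  · constructor
    · rintro ⟨hWM, hDDS⟩
      exact ⟨WM_TK_of_WM hT hWM, dense_distal_of_forall hT hTK hDDS⟩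
    · rintro ⟨hWMK, hDense⟩
      exact ⟨WM_of_transitive_TK hT hTs (transitive_of_WM hWMK), forall_of_dense hDense⟩
  · constructor
    · rintro ⟨hWMK, hDense⟩
      refine ⟨hWMK, fun 𝒰 h𝒰 h𝒰n => ?_⟩
      obtain ⟨C, hCd, hC𝒰⟩ := hDense.exists_mem_open h𝒰 h𝒰n
      refine ⟨pt C, ?_, by rw [coe_pt]; exact Set.singleton_subset_iff.2 hC𝒰⟩
      exact hCd.map hTK hTKK continuous_pt fun A => (TK_pt (TK T hT) hTK A).symm
    · rintro ⟨hWMK, hDDSY⟩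
      refine ⟨hWMK, dense_distal_of_forall hT hTK ?_⟩
      intro U hU hUn
      obtain ⟨𝒞, h𝒞d, h𝒞sub⟩ := hDDSY {C : NonemptyCompacts X | (C : Set X) ⊆ U}
        (isOpen_subsets hU)
        ⟨pt hUn.choose, by
          rw [mem_setOf_eq, coe_pt]
          exact Set.singleton_subset_iff.2 hUn.choose_spec⟩
      refine ⟨uni 𝒞, ?_, ?_⟩
      · exact h𝒞d.map hTKK hTK continuous_uni fun 𝒟 => uni_TK T hT hTK 𝒟
      · rw [coe_uni]
        exact Set.iUnion₂_subset fun D hD => h𝒞sub hD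


end Paper
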